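/- Entire-frequency KYP-type performance condition for LPV systems (Lemma 6, sufficiency). Let n, p, q be positive integers and let A, B, C, D be continuous matrix-valued functions on [0,∞) with values in ℂ^{n×n}, ℂ^{n×p}, ℂ^{q×n}, ℂ^{q×p}. Let x : [0,∞) → ℂⁿ be continuously differentiable with x(0) = 0, let u : [0,∞) → ℂ^p be continuous, assume ẋ(t) = A(t)x(t) + B(t)u(t) for all t ≥ 0, and define y(t) = C(t)x(t) + D(t)u(t). Let Π ∈ ℂ^{(q+p)×(q+p)} be Hermitian and let P : [0,∞) → ℂ^{n×n} be differentiable with P(t) Hermitian for every t. Assume: (i) for every t ≥ 0, [A(t) B(t); I 0]^* (Θ ⊗ P(t) + Θ_d ⊗ P'(t)) [A(t) B(t); I 0] + [C(t) D(t); 0 I]^* Π [C(t) D(t); 0 I] ⪯ 0; (ii) t ↦ [y(t); u(t)]^* Π [y(t); u(t)] is integrable on [0,∞); (iii) lim_{T→∞} x(T)^* P(T) x(T) exists and is nonnegative. Then ∫₀^∞ [y(t); u(t)]^* Π [y(t); u(t)] dt ≤ 0. -/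

import Mathlib

open Matrix MeasureTheory
open scoped ComplexOrder Matrix.Norms.L2Operator

/-- `Ψ ⊗ Q`: the Kronecker product of a `2×2` matrix with an `n×n` matrix,
realized as a `2n × 2n` block matrix. -/
noncomputable def kron2 {n : ℕ} (Ψ : Matrix (Fin 2) (Fin 2) ℂ)
    (Q : Matrix (Fin n) (Fin n) ℂ) : Matrix (Fin n ⊕ Fin n) (Fin n ⊕ Fin n) ℂ :=
  Matrix.fromBlocks (Ψ 0 0 • Q) (Ψ 0 1 • Q) (Ψ 1 0 • Q) (Ψ 1 1 • Q)

/-- The real-valued Hermitian quadratic form `z ↦ z^* H z`. -/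
noncomputable def qf {m : Type*} [Fintype m] (H : Matrix m m ℂ) (z : m → ℂ) : ℝ :=
  (dotProduct (star z) (H.mulVec z)).re

lemma qf_congr {m k : Type*} [Fintype m] [Fintype k] (K : Matrix k k ℂ) (F : Matrix k m ℂ)
    (z : m → ℂ) : qf (Fᴴ * K * F) z = qf K (F.mulVec z) := by
  simp only [qf, Matrix.star_mulVec, ← Matrix.mulVec_mulVec, Matrix.dotProduct_mulVec,
    Matrix.vecMul_vecMul]

lemma qf_add {m : Type*} [Fintype m] (M N : Matrix m m ℂ) (z : m → ℂ) :
    qf (M + N) z = qf M z + qf N z := by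
  simp [qf, Matrix.add_mulVec, dotProduct_add]

lemma qf_nonpos {m : Type*} [Fintype m] {M : Matrix m m ℂ} (h : (-M).PosSemidef) (z : m → ℂ) :
    qf M z ≤ 0 := by
  have h2 := h.dotProduct_mulVec_nonneg z
  rw [Matrix.neg_mulVec, dotProduct_neg] at h2
  rw [Complex.le_def] at h2
  simp only [qf]
  simpa using h2.1

lemma continuous_qf {m : Type*} [Fintype m] (H : Matrix m m ℂ) :
    Continuous (fun z : m → ℂ => qf H z) := by
  simp only [qf, dotProduct, Matrix.mulVec]
  refine Complex.continuous_re.comp (continuous_finset_sum _ fun i _ => ?_)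
  exact (continuous_star.comp (continuous_apply i)).mul
    (continuous_finset_sum _ fun j _ => continuous_const.mul (continuous_apply j))

noncomputable def entryCLM {a b : ℕ} (i : Fin a) (j : Fin b) :
    Matrix (Fin a) (Fin b) ℂ →L[ℝ] ℂ where
  toFun M := M i j
  map_add' _ _ := rfl
  map_smul' _ _ := rfl
  cont := (continuous_apply j).comp (continuous_apply i)

lemma contOn_mulVec {a b : ℕ} {M : ℝ → Matrix (Fin a) (Fin b) ℂ} {v : ℝ → Fin b → ℂ}
    {s : Set ℝ} (hM : ContinuousOn M s) (hv : ContinuousOn v s) :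
    ContinuousOn (fun t => (M t).mulVec (v t)) s := by
  rw [continuousOn_pi]
  intro i
  simp only [Matrix.mulVec, dotProduct]
  refine continuousOn_finset_sum _ fun j _ => ContinuousOn.mul ?_ ?_
  · exact (entryCLM i j).continuous.comp_continuousOn hM
  · exact (continuous_apply j).comp_continuousOn hv

lemma hasDerivAt_qf {n : ℕ} {P P' : ℝ → Matrix (Fin n) (Fin n) ℂ} {x x' : ℝ → Fin n → ℂ} {t : ℝ}
    (hP : HasDerivAt P (P' t) t) (hx : HasDerivAt x (x' t) t) :
    HasDerivAt (fun s => qf (P s) (x s))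
      ((star (x' t) ⬝ᵥ (P t) *ᵥ x t + star (x t) ⬝ᵥ (P' t) *ᵥ x t
        + star (x t) ⬝ᵥ (P t) *ᵥ x' t).re) t := by
  have hxi : ∀ i, HasDerivAt (fun s => x s i) (x' t i) t := fun i => hasDerivAt_pi.1 hx i
  have hPij : ∀ i j, HasDerivAt (fun s => P s i j) (P' t i j) t :=
    fun i j => (entryCLM i j).hasFDerivAt.comp_hasDerivAt t hP
  have key : HasDerivAt (fun s => ∑ i, ∑ j, star (x s i) * (P s i j * x s j))
      (∑ i, ∑ j, (star (x' t i) * (P t i j * x t j)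
        + star (x t i) * (P' t i j * x t j + P t i j * x' t j))) t := by
    refine HasDerivAt.fun_sum fun i _ => HasDerivAt.fun_sum fun j _ => ?_
    exact ((hxi i).star).mul ((hPij i j).mul (hxi j))
  have hfun : (fun s => ∑ i, ∑ j, star (x s i) * (P s i j * x s j))
      = fun s => star (x s) ⬝ᵥ (P s) *ᵥ x s := by
    funext s
    simp [dotProduct, Matrix.mulVec, Finset.mul_sum]
  rw [hfun] at key
  have hval : (∑ i, ∑ j, (star (x' t i) * (P t i j * x t j)
        + star (x t i) * (P' t i j * x t j + P t i j * x' t j)))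
      = star (x' t) ⬝ᵥ (P t) *ᵥ x t + star (x t) ⬝ᵥ (P' t) *ᵥ x t
        + star (x t) ⬝ᵥ (P t) *ᵥ x' t := by
    simp only [dotProduct, Matrix.mulVec, Finset.mul_sum, mul_add,
      Finset.sum_add_distrib, Pi.star_apply]
    ring_nf
  rw [hval] at key
  exact Complex.reCLM.hasFDerivAt.comp_hasDerivAt t key

lemma qf_fromBlocks_storage {n : ℕ} (P P' : Matrix (Fin n) (Fin n) ℂ) (v w : Fin n → ℂ) :
    qf (Matrix.fromBlocks 0 P P P') (Sum.elim v w)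
      = (star v ⬝ᵥ P *ᵥ w + star w ⬝ᵥ P' *ᵥ w + star w ⬝ᵥ P *ᵥ v).re := by
  have hstar : star (Sum.elim v w) = Sum.elim (star v) (star w) :=
    funext fun i => by cases i <;> rfl
  rw [qf, Matrix.fromBlocks_mulVec, hstar, sumElim_dotProduct_sumElim]
  simp only [Matrix.zero_mulVec, zero_add, dotProduct_add, Sum.elim_comp_inl,
    Sum.elim_comp_inr]
  ring_nf

/-- Entire-frequency KYP-type performance condition for LPV systems
(Lemma 6, sufficiency). -/
theorem KYP_LPV_entire_frequency
    {n p q : ℕ} (hn : 0 < n) (hp : 0 < p) (hq : 0 < q)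
    (A : ℝ → Matrix (Fin n) (Fin n) ℂ) (B : ℝ → Matrix (Fin n) (Fin p) ℂ)
    (C : ℝ → Matrix (Fin q) (Fin n) ℂ) (D : ℝ → Matrix (Fin q) (Fin p) ℂ)
    (hA : ContinuousOn A (Set.Ici 0)) (hB : ContinuousOn B (Set.Ici 0))
    (hC : ContinuousOn C (Set.Ici 0)) (hD : ContinuousOn D (Set.Ici 0))
    (x : ℝ → Fin n → ℂ) (x' : ℝ → Fin n → ℂ)
    (hx : ∀ t ∈ Set.Ici (0:ℝ), HasDerivAt x (x' t) t)
    (hx'c : ContinuousOn x' (Set.Ici 0))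
    (hx0 : x 0 = 0)
    (u : ℝ → Fin p → ℂ) (hu : ContinuousOn u (Set.Ici 0))
    (hode : ∀ t ∈ Set.Ici (0:ℝ), x' t = (A t).mulVec (x t) + (B t).mulVec (u t))
    (y : ℝ → Fin q → ℂ)
    (hy : ∀ t ∈ Set.Ici (0:ℝ), y t = (C t).mulVec (x t) + (D t).mulVec (u t))
    (Pi : Matrix (Fin q ⊕ Fin p) (Fin q ⊕ Fin p) ℂ) (hPi : Pi.IsHermitian)
    (P P' : ℝ → Matrix (Fin n) (Fin n) ℂ)
    (hP : ∀ t ∈ Set.Ici (0:ℝ), HasDerivAt P (P' t) t)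
    (hPH : ∀ t ∈ Set.Ici (0:ℝ), (P t).IsHermitian)
    -- (i) the pointwise LMI
    (hLMI : ∀ t ∈ Set.Ici (0:ℝ),
      Matrix.PosSemidef
        (-((Matrix.fromBlocks (A t) (B t) (1 : Matrix (Fin n) (Fin n) ℂ) 0)ᴴ *
              (kron2 !![0,1;1,0] (P t) + kron2 !![0,0;0,1] (P' t)) *
              Matrix.fromBlocks (A t) (B t) (1 : Matrix (Fin n) (Fin n) ℂ) 0 +
            (Matrix.fromBlocks (C t) (D t) 0 (1 : Matrix (Fin p) (Fin p) ℂ))ᴴ * Pi *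
              Matrix.fromBlocks (C t) (D t) 0 (1 : Matrix (Fin p) (Fin p) ℂ))))
    -- (ii) integrability of the performance integrand
    (hPerfInt : IntegrableOn (fun t => qf Pi (Sum.elim (y t) (u t))) (Set.Ioi 0))
    -- (iii) the storage function has a nonnegative limit
    (hlim : ∃ L : ℝ, 0 ≤ L ∧
      Filter.Tendsto (fun T => qf (P T) (x T)) Filter.atTop (nhds L)) :
    ∫ t in Set.Ioi (0:ℝ), qf Pi (Sum.elim (y t) (u t)) ≤ 0 := by
  set g : ℝ → ℝ := fun t => qf Pi (Sum.elim (y t) (u t)) with hg_def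
  set V : ℝ → ℝ := fun T => qf (P T) (x T) with hV_def
  set dV : ℝ → ℝ := fun t => (star (x' t) ⬝ᵥ (P t) *ᵥ x t + star (x t) ⬝ᵥ (P' t) *ᵥ x t
        + star (x t) ⬝ᵥ (P t) *ᵥ x' t).re with hdV_def
  -- continuity facts
  have hxc : ContinuousOn x (Set.Ici 0) := fun t ht => (hx t ht).continuousAt.continuousWithinAt
  have hyc : ContinuousOn y (Set.Ici 0) := by
    refine ContinuousOn.congr ((contOn_mulVec hC hxc).add (contOn_mulVec hD hu)) ?_
    intro t ht; exact hy t ht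
  have hsc : ContinuousOn (fun t => Sum.elim (y t) (u t)) (Set.Ici 0) := by
    rw [continuousOn_pi]
    rintro (i | i)
    · exact (continuous_apply i).comp_continuousOn hyc
    · exact (continuous_apply i).comp_continuousOn hu
  have hgc : ContinuousOn g (Set.Ici 0) := (continuous_qf Pi).comp_continuousOn hsc
  have hgm : AEStronglyMeasurable g (volume.restrict (Set.Ici 0)) :=
    hgc.aestronglyMeasurable measurableSet_Ici
  have hgint : ∀ t ∈ Set.Ici (0:ℝ), IntervalIntegrable g volume 0 t := by
    intro t ht
    refine (hgc.mono ?_).intervalIntegrable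
    rw [Set.uIcc_of_le ht]
    exact Set.Icc_subset_Ici_self
  -- derivative of the storage function
  have hVd : ∀ t ∈ Set.Ici (0:ℝ), HasDerivAt V (dV t) t :=
    fun t ht => hasDerivAt_qf (hP t ht) (hx t ht)
  -- pointwise dissipation inequality
  have hkey : ∀ t ∈ Set.Ici (0:ℝ), dV t + g t ≤ 0 := by
    intro t ht
    have h1 := qf_nonpos (hLMI t ht) (Sum.elim (x t) (u t))
    rw [qf_add, qf_congr, qf_congr] at h1
    have hF : (Matrix.fromBlocks (A t) (B t) 1 0).mulVec (Sum.elim (x t) (u t))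
        = Sum.elim (x' t) (x t) := by
      rw [Matrix.fromBlocks_mulVec]
      simp [hode t ht]
    have hG : (Matrix.fromBlocks (C t) (D t) 0 1).mulVec (Sum.elim (x t) (u t))
        = Sum.elim (y t) (u t) := by
      rw [Matrix.fromBlocks_mulVec]
      simp [hy t ht]
    rw [hF, hG] at h1
    have hKmat : kron2 !![0,1;1,0] (P t) + kron2 !![0,0;0,1] (P' t)
        = Matrix.fromBlocks 0 (P t) (P t) (P' t) := by
      simp [kron2, Matrix.fromBlocks_add]
    rw [hKmat, qf_fromBlocks_storage] at h1
    have : dV t = (star (x' t) ⬝ᵥ (P t) *ᵥ x t + star (x t) ⬝ᵥ (P' t) *ᵥ x t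
        + star (x t) ⬝ᵥ (P t) *ᵥ x' t).re := rfl
    rw [this]
    linarith [h1]
  -- the primitive of g
  set W : ℝ → ℝ := fun T => ∫ s in (0:ℝ)..T, g s with hW_def
  have hWd : ∀ t ∈ Set.Ioi (0:ℝ), HasDerivAt W (g t) t := by
    intro t ht
    exact intervalIntegral.integral_hasDerivAt_right (hgint t (Set.mem_Ici.2 (le_of_lt ht)))
      ⟨Set.Ici 0, Ici_mem_nhds ht, hgm⟩ (hgc.continuousAt (Ici_mem_nhds ht))
  have hW0 : ContinuousWithinAt W (Set.Ici 0) 0 := by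
    have := intervalIntegral.integral_hasDerivWithinAt_right (s := Set.Ici (0:ℝ))
      (t := Set.Ioi (0:ℝ)) (hgint 0 Set.self_mem_Ici)
      ⟨Set.Ici 0, Filter.mem_of_superset self_mem_nhdsWithin Set.Ioi_subset_Ici_self, hgm⟩
      ((hgc 0 Set.self_mem_Ici).mono Set.Ioi_subset_Ici_self)
    exact this.continuousWithinAt
  have hWc : ContinuousOn W (Set.Ici 0) := by
    intro t ht
    rcases eq_or_lt_of_le (Set.mem_Ici.1 ht) with h | h
    · rw [← h]; exact hW0
    · exact (hWd t h).continuousAt.continuousWithinAt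
  have hVc : ContinuousOn V (Set.Ici 0) :=
    fun t ht => (hVd t ht).continuousAt.continuousWithinAt
  -- V + W is antitone on [0, ∞)
  have hanti : AntitoneOn (fun T => V T + W T) (Set.Ici 0) := by
    refine antitoneOn_of_deriv_nonpos (convex_Ici 0) (hVc.add hWc) ?_ ?_
    · intro t ht
      rw [interior_Ici] at ht
      exact ((hVd t (Set.mem_Ici.2 ht.le)).add (hWd t ht)).differentiableAt.differentiableWithinAt
    · intro t ht
      rw [interior_Ici] at ht
      rw [show (fun T => V T + W T) = V + W from rfl, ((hVd t (Set.mem_Ici.2 ht.le)).add (hWd t ht)).deriv]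
      exact hkey t (Set.mem_Ici.2 ht.le)
  have hV0 : V 0 = 0 := by simp [hV_def, qf, hx0]
  have hbound : ∀ T : ℝ, 0 ≤ T → W T ≤ -V T := by
    intro T hT
    have h2 : V T + W T ≤ V 0 + W 0 := hanti Set.self_mem_Ici hT hT
    have hw0 : W 0 = 0 := intervalIntegral.integral_same
    rw [hV0, hw0] at h2
    linarith
  obtain ⟨L, hL, hVlim⟩ := hlim
  have hWlim : Filter.Tendsto W Filter.atTop
      (nhds (∫ t in Set.Ioi (0:ℝ), g t)) :=
    MeasureTheory.intervalIntegral_tendsto_integral_Ioi 0 hPerfInt Filter.tendsto_id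
  have hle : (∫ t in Set.Ioi (0:ℝ), g t) ≤ -L := by
    refine le_of_tendsto_of_tendsto hWlim hVlim.neg ?_
    filter_upwards [Filter.eventually_ge_atTop (0:ℝ)] with T hT
    exact hbound T hT
  linarith
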